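/- Let Δ > 0, r > 0, s ≥ 0 and β, γ be real numbers with 0 < β, 2β ≤ γ and β + γ + π/2 < π. Assume the hyperbolic law-of-sines relation sinh(r)·sin(γ) = sinh(Δ)·sin(β) and the hyperbolic Pythagorean relation cosh(s) = cosh(r)·cosh(Δ). Then s < arcosh(√(1 + (1/3)·sinh(Δ)²)·cosh(Δ)). -/

import Mathlib

/-- Inverse hyperbolic cosine: for `x ≥ 1`, `arcosh x` is the unique `y ≥ 0`
with `Real.cosh y = x`; defined by the standard formula `log (x + √(x² - 1))`. -/
noncomputable def Real.arcosh' (x : ℝ) : ℝ := Real.log (x + Real.sqrt (x ^ 2 - 1))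

lemma cosh_arcosh' (x : ℝ) (hx : 1 ≤ x) : Real.cosh (Real.arcosh' x) = x := by
  unfold Real.arcosh'
  have hsq : (0:ℝ) ≤ x ^ 2 - 1 := by nlinarith
  have h1 : Real.sqrt (x ^ 2 - 1) ^ 2 = x ^ 2 - 1 := Real.sq_sqrt hsq
  have hsnn : 0 ≤ Real.sqrt (x ^ 2 - 1) := Real.sqrt_nonneg _
  have ht : 0 < x + Real.sqrt (x ^ 2 - 1) := by linarith
  rw [Real.cosh_eq, Real.exp_neg, Real.exp_log ht]
  rw [div_eq_iff (by norm_num : (2:ℝ) ≠ 0)]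
  field_simp
  nlinarith

theorem stmt_0 (Δ r s β γ : ℝ)
    (hΔ : 0 < Δ) (hr : 0 < r) (hs : 0 ≤ s)
    (hβ : 0 < β) (hβγ : 2 * β ≤ γ) (hsum : β + γ + Real.pi / 2 < Real.pi)
    (hsin : Real.sinh r * Real.sin γ = Real.sinh Δ * Real.sin β)
    (hpyth : Real.cosh s = Real.cosh r * Real.cosh Δ) :
    s < Real.arcosh' (Real.sqrt (1 + (1 / 3) * Real.sinh Δ ^ 2) * Real.cosh Δ) := by
  have hpi := Real.pi_pos
  have hγlt : γ < Real.pi / 2 := by linarith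
  have hβ6 : β < Real.pi / 6 := by linarith
  -- sin γ ≥ sin (2β)
  have hmem1 : 2 * β ∈ Set.Icc (-(Real.pi/2)) (Real.pi/2) := by
    constructor <;> nlinarith
  have hmem2 : γ ∈ Set.Icc (-(Real.pi/2)) (Real.pi/2) := by
    constructor <;> nlinarith
  have hsinmono : Real.sin (2 * β) ≤ Real.sin γ :=
    Real.strictMonoOn_sin.monotoneOn hmem1 hmem2 hβγ
  have hsinβ : 0 < Real.sin β := Real.sin_pos_of_pos_of_lt_pi hβ (by nlinarith)
  -- cos β > √3/2
  have hcos : Real.cos (Real.pi / 6) < Real.cos β := by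
    apply Real.strictAntiOn_cos ⟨le_of_lt hβ, by nlinarith⟩
      ⟨by positivity, by nlinarith⟩ hβ6
  rw [Real.cos_pi_div_six] at hcos
  have hsqrt3 : Real.sqrt 3 ^ 2 = 3 := Real.sq_sqrt (by norm_num)
  have hsqrt3pos : 0 < Real.sqrt 3 := by positivity
  have hsinhr : 0 < Real.sinh r := by rwa [Real.sinh_pos_iff]
  have hsinhΔ : 0 < Real.sinh Δ := by rwa [Real.sinh_pos_iff]
  -- sinh Δ > √3 sinh r
  have hsin2β : Real.sin (2 * β) = 2 * Real.sin β * Real.cos β := Real.sin_two_mul β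
  have hkey : Real.sqrt 3 * Real.sinh r < Real.sinh Δ := by
    have h1 : Real.sinh r * (2 * Real.sin β * Real.cos β) ≤ Real.sinh Δ * Real.sin β := by
      rw [← hsin2β, ← hsin]
      exact mul_le_mul_of_nonneg_left hsinmono (le_of_lt hsinhr)
    have h2 : Real.sinh r * (2 * Real.cos β) ≤ Real.sinh Δ := by
      have := mul_le_mul_of_nonneg_right h1 (le_of_lt (inv_pos.mpr hsinβ))
      field_simp at this
      nlinarith
    nlinarith
  -- cosh r < √(1 + sinh²Δ/3)
  have hcoshr : Real.cosh r < Real.sqrt (1 + (1/3) * Real.sinh Δ ^ 2) := by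
    rw [Real.lt_sqrt (Real.cosh_pos r).le]
    have h3 := mul_lt_mul'' hkey hkey (by positivity) (by positivity)
    nlinarith [Real.cosh_sq r]
  have hcoshΔ1 : (1:ℝ) ≤ Real.cosh Δ := Real.one_le_cosh Δ
  set X := Real.sqrt (1 + (1/3) * Real.sinh Δ ^ 2) * Real.cosh Δ with hX
  have hsq1 : (1:ℝ) ≤ Real.sqrt (1 + (1/3) * Real.sinh Δ ^ 2) := by
    have h := Real.sqrt_le_sqrt (show (1:ℝ) ≤ 1 + (1/3) * Real.sinh Δ ^ 2 by nlinarith [sq_nonneg (Real.sinh Δ)])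
    simpa using h
  have hX1 : 1 ≤ X := one_le_mul_of_one_le_of_one_le hsq1 hcoshΔ1
  have hcs : Real.cosh s < X := by
    rw [hpyth]
    exact mul_lt_mul_of_pos_right hcoshr (Real.cosh_pos Δ)
  have harc : Real.cosh s < Real.cosh (Real.arcosh' X) := by
    rwa [cosh_arcosh' X hX1]
  rw [Real.cosh_lt_cosh] at harc
  have harcnn : 0 ≤ Real.arcosh' X := by
    apply Real.log_nonneg
    have := Real.sqrt_nonneg (X ^ 2 - 1); linarith
  rw [abs_of_nonneg hs, abs_of_nonneg harcnn] at harc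
  exact harc
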